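/- Let 0 < T < 1, q ≥ 1, and i ∈ {1,2}. Then there exist λ > 0 and a probability density function ρ : [0,∞) → [0,∞) such that: (a) ∫_r^∞ ρ(s) ds ≥ e^{−λr} for all r ≥ 0; and (b) inf_{s ∈ [0,T]} ρ(s) > 1 / C_i(q;T), where C_i(q;T) is computed with this λ. -/

import Mathlib

open MeasureTheory Set

lemma intExp (l a : ℝ) (hl : 0 < l) :
    IntegrableOn (fun r => l * Real.exp (-(l * r))) (Set.Ioi a) := by
  have h := (exp_neg_integrableOn_Ioi a hl).const_mul l
  refine IntegrableOn.congr_fun h (fun r _ => by ring_nf) measurableSet_Ioi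

lemma tailExp (l a : ℝ) (hl : 0 < l) :
    ∫ r in Set.Ioi a, l * Real.exp (-(l * r)) = Real.exp (-(l * a)) := by
  have hderiv : ∀ x ∈ Set.Ioi a,
      HasDerivAt (fun r => -Real.exp (-(l * r))) (l * Real.exp (-(l * x))) x := by
    intro x _
    have h1 : HasDerivAt (fun r : ℝ => -(l * r)) (-l) x := by
      have := ((hasDerivAt_id x).const_mul l).neg
      simp only [mul_one] at this
      exact this
    have h2 := (Real.hasDerivAt_exp (-(l * x))).comp x h1
    refine h2.neg.congr_deriv ?_
    ring
  have hcont : ContinuousWithinAt (fun r => -Real.exp (-(l * r))) (Set.Ici a) a := by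
    apply Continuous.continuousWithinAt
    continuity
  have htend : Filter.Tendsto (fun r => -Real.exp (-(l * r))) Filter.atTop (nhds 0) := by
    have : Filter.Tendsto (fun r : ℝ => l * r) Filter.atTop Filter.atTop :=
      Filter.Tendsto.const_mul_atTop hl Filter.tendsto_id
    have := (Real.tendsto_exp_neg_atTop_nhds_zero.comp this).neg
    simpa using this
  have := integral_Ioi_of_hasDerivAt_of_tendsto hcont hderiv (intExp l a hl) htend
  simpa using this



/-- `C_i(q;T)`, `i ∈ {1,2}`, from the paper: `C₁(q;T) := (1 − e^{−2λT})^{−1/(2q)}` and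
`C₂(q;T) := (√(4 + e^{−2λT}) − e^{−λT})^{1/q} / (2^{1/q} (1 − e^{−λT})^{1/(2q)})`. -/
noncomputable def Ci (i : Fin 2) (lam q T : ℝ) : ℝ :=
  if i = 0 then (1 - Real.exp (-(2 * lam * T))) ^ (-(1 / (2 * q)))
  else (Real.sqrt (4 + Real.exp (-(2 * lam * T))) - Real.exp (-(lam * T))) ^ (1 / q)
    / ((2:ℝ) ^ (1 / q) * (1 - Real.exp (-(lam * T))) ^ (1 / (2 * q)))

set_option maxHeartbeats 1600000 in
/-- For `0 < T < 1`, `q ≥ 1` and `i ∈ {1,2}` there exist `λ > 0` and a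
probability density `ρ` on `[0,∞)` whose tail dominates `e^{−λr}` and with
`inf_{[0,T]} ρ > 1 / C_i(q;T)`. -/
theorem stmt_6 (T q : ℝ) (hT : 0 < T) (hT1 : T < 1) (hq : 1 ≤ q) (i : Fin 2) :
    ∃ lam > (0:ℝ), ∃ ρ : ℝ → ℝ, Measurable ρ ∧ (∀ r, 0 ≤ r → 0 ≤ ρ r) ∧
      MeasureTheory.IntegrableOn ρ (Set.Ioi 0) ∧
      (∫ r in Set.Ioi (0:ℝ), ρ r) = 1 ∧
      (∀ r : ℝ, 0 ≤ r → Real.exp (-(lam * r)) ≤ ∫ s in Set.Ioi r, ρ s) ∧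
      1 / Ci i lam q T < sInf (ρ '' Set.Icc 0 T) := by
  have hq0 : (0:ℝ) < q := lt_of_lt_of_le one_pos hq
  set s : ℝ := Real.sqrt T with hs_def
  have hs0 : 0 < s := Real.sqrt_pos.2 hT
  have hs1 : s < 1 := by
    rw [hs_def, show (1:ℝ) = Real.sqrt 1 by simp]
    exact Real.sqrt_lt_sqrt hT.le hT1
  have hTs : s ^ 2 = T := Real.sq_sqrt hT.le
  set x : ℝ := (1 - s) / 2 with hx_def
  have hx0 : 0 < x := by rw [hx_def]; linarith
  have hx1 : x < 1 / 2 := by rw [hx_def]; linarith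
  set lam : ℝ := Real.log (2 / (1 - s)) / T with hlam_def
  have hfrac : (1:ℝ) < 2 / (1 - s) := by
    rw [lt_div_iff₀ (by linarith : (0:ℝ) < 1 - s)]; linarith
  have hlam : 0 < lam := div_pos (Real.log_pos hfrac) hT
  have hlamT : lam * T = Real.log (2 / (1 - s)) := by
    rw [hlam_def]; field_simp
  have hxe : Real.exp (-(lam * T)) = x := by
    rw [hlamT, Real.exp_neg, Real.exp_log (by linarith : (0:ℝ) < 2 / (1 - s))]
    rw [hx_def]
    field_simp
  have hxe2 : Real.exp (-(2 * lam * T)) = x ^ 2 := by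
    rw [show -(2 * lam * T) = -(lam * T) + -(lam * T) by ring, Real.exp_add, hxe]
    ring
  set c : ℝ := (1 - x) / T with hc_def
  have hc0 : 0 < c := div_pos (by linarith) hT
  refine ⟨lam, hlam, fun r => if r ≤ T then c else lam * Real.exp (-(lam * r)), ?_, ?_, ?_, ?_, ?_, ?_⟩
  · -- measurable
    exact Measurable.ite measurableSet_Iic measurable_const (by fun_prop)
  · -- nonneg
    intro r _
    by_cases h : r ≤ T <;> simp [h]
    · exact hc0.le
    · positivity
  · -- integrable
    rw [← Set.Ioc_union_Ioi_eq_Ioi hT.le]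
    apply IntegrableOn.union
    · exact (integrableOn_const measure_Ioc_lt_top.ne).congr_fun
        (fun r hr => (if_pos hr.2).symm) measurableSet_Ioc
    · refine IntegrableOn.congr_fun (intExp lam T hlam) ?_ measurableSet_Ioi
      intro r hr
      simp [not_le.2 (mem_Ioi.1 hr)]
  · -- integral = 1
    rw [← Set.Ioc_union_Ioi_eq_Ioi hT.le]
    rw [setIntegral_union (Set.Ioc_disjoint_Ioi le_rfl) measurableSet_Ioi]
    · have h1 : ∫ r in Set.Ioc 0 T, (if r ≤ T then c else lam * Real.exp (-(lam * r))) = c * T := by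
        rw [setIntegral_congr_fun measurableSet_Ioc (g := fun _ => c) (fun r hr => by simp [hr.2])]
        simp [Real.volume_Ioc, ENNReal.toReal_ofReal hT.le, max_eq_left hT.le]
        ring
      have h2 : ∫ r in Set.Ioi T, (if r ≤ T then c else lam * Real.exp (-(lam * r)))
          = Real.exp (-(lam * T)) := by
        rw [setIntegral_congr_fun measurableSet_Ioi
          (g := fun r => lam * Real.exp (-(lam * r)))
          (fun r hr => by simp [not_le.2 (mem_Ioi.1 hr)])]
        exact tailExp lam T hlam
      rw [h1, h2, hxe, hc_def]
      field_simp
      ring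
    · exact (integrableOn_const measure_Ioc_lt_top.ne).congr_fun
        (fun r hr => (if_pos hr.2).symm) measurableSet_Ioc
    · refine IntegrableOn.congr_fun (intExp lam T hlam) ?_ measurableSet_Ioi
      intro r hr
      simp [not_le.2 (mem_Ioi.1 hr)]
  · -- tail bound
    intro r hr
    rcases le_or_gt T r with hrT | hrT
    · have : ∫ u in Set.Ioi r, (if u ≤ T then c else lam * Real.exp (-(lam * u)))
          = Real.exp (-(lam * r)) := by
        rw [setIntegral_congr_fun measurableSet_Ioi
          (g := fun u => lam * Real.exp (-(lam * u)))
          (fun u hu => by simp [not_le.2 (lt_of_le_of_lt hrT (mem_Ioi.1 hu))])]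
        exact tailExp lam r hlam
      rw [this]
    · rw [← Set.Ioc_union_Ioi_eq_Ioi hrT.le]
      rw [setIntegral_union (Set.Ioc_disjoint_Ioi le_rfl) measurableSet_Ioi]
      · have h1 : ∫ u in Set.Ioc r T, (if u ≤ T then c else lam * Real.exp (-(lam * u)))
            = c * (T - r) := by
          rw [setIntegral_congr_fun measurableSet_Ioc (g := fun _ => c) (fun u hu => by simp [hu.2])]
          simp [Real.volume_Ioc, ENNReal.toReal_ofReal (by linarith : (0:ℝ) ≤ T - r), max_eq_left (by linarith : (0:ℝ) ≤ T - r)]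
          ring
        have h2 : ∫ u in Set.Ioi T, (if u ≤ T then c else lam * Real.exp (-(lam * u)))
            = Real.exp (-(lam * T)) := by
          rw [setIntegral_congr_fun measurableSet_Ioi
            (g := fun u => lam * Real.exp (-(lam * u)))
            (fun u hu => by simp [not_le.2 (mem_Ioi.1 hu)])]
          exact tailExp lam T hlam
        rw [h1, h2, hxe]
        -- c * (T - r) + x = 1 - c * r since c * T = 1 - x
        have hcT : c * T = 1 - x := by rw [hc_def]; field_simp
        have key : Real.exp (-(lam * r)) ≤ 1 - c * r := by
          have ha : (0:ℝ) ≤ 1 - r / T := by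
            rw [sub_nonneg, div_le_one hT]; exact hrT.le
          have hb : (0:ℝ) ≤ r / T := div_nonneg hr hT.le
          have hab : (1 - r / T) + r / T = 1 := by ring
          have hcv := convexOn_exp.2 (Set.mem_univ (0:ℝ)) (Set.mem_univ (-(lam * T))) ha hb hab
          simp only [smul_eq_mul, mul_zero, zero_add, Real.exp_zero, mul_one] at hcv
          have e1 : r / T * -(lam * T) = -(lam * r) := by field_simp
          rw [e1, hxe] at hcv
          calc Real.exp (-(lam * r)) ≤ 1 - r / T + r / T * x := hcv
            _ = 1 - c * r := by rw [hc_def]; field_simp; ring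
        linarith
      · exact (integrableOn_const measure_Ioc_lt_top.ne).congr_fun
          (fun u hu => (if_pos hu.2).symm) measurableSet_Ioc
      · refine IntegrableOn.congr_fun (intExp lam T hlam) ?_ measurableSet_Ioi
        intro u hu
        simp [not_le.2 (mem_Ioi.1 hu)]
  · -- inf bound
    have himg : (fun r => if r ≤ T then c else lam * Real.exp (-(lam * r))) '' Set.Icc 0 T = {c} := by
      apply Set.Subset.antisymm
      · rintro _ ⟨y, hy, rfl⟩
        simp [hy.2]
      · rintro y (rfl : y = c)
        exact ⟨0, ⟨le_refl 0, hT.le⟩, by simp [hT.le]⟩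
    rw [himg, csInf_singleton]
    -- now 1 / Ci i lam q T < c
    have hx2 : x ^ 2 < 1 := by nlinarith
    have hi : i = 0 ∨ i = 1 := by fin_cases i <;> simp
    rcases hi with rfl | rfl
    · have h0 : (0:ℝ) ≤ 1 - x ^ 2 := by nlinarith
      simp only [Ci, if_pos rfl, hxe2, one_div, Real.rpow_neg h0, inv_inv, if_true]
      have h1 : (1 - x ^ 2) ^ (2 * q)⁻¹ ≤ 1 :=
        Real.rpow_le_one (by nlinarith) (by nlinarith) (by positivity)
      have h2 : (1:ℝ) < c := by
        rw [hc_def, lt_div_iff₀ hT]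
        nlinarith
      linarith
    · have hne : (1 : Fin 2) ≠ 0 := by decide
      simp only [Ci, if_neg hne, hxe, hxe2]
      rw [one_div_div]
      set A : ℝ := Real.sqrt (4 + x ^ 2) - x with hA_def
      have hA2 : 2 - x ≤ A := by
        have : Real.sqrt 4 ≤ Real.sqrt (4 + x ^ 2) := Real.sqrt_le_sqrt (by nlinarith)
        have h4 : Real.sqrt 4 = 2 := by
          rw [show (4:ℝ) = 2 ^ 2 by norm_num, Real.sqrt_sq (by norm_num)]
        rw [hA_def]; linarith [h4 ▸ this]
      have h2x : (0:ℝ) < 2 - x := by linarith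
      have hApos : 0 < A := lt_of_lt_of_le h2x hA2
      have hD1 : (1 - x) ^ (1 / (2 * q)) ≤ 1 :=
        Real.rpow_le_one (by linarith) (by linarith) (by positivity)
      have hB : (0:ℝ) ≤ (2:ℝ) ^ (1 / q) := by positivity
      have step1 : (2:ℝ) ^ (1 / q) * (1 - x) ^ (1 / (2 * q)) / A ^ (1 / q)
          ≤ (2:ℝ) ^ (1 / q) / (2 - x) ^ (1 / q) := by
        apply div_le_div₀ hB
        · calc (2:ℝ) ^ (1 / q) * (1 - x) ^ (1 / (2 * q)) ≤ (2:ℝ) ^ (1 / q) * 1 :=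
            mul_le_mul_of_nonneg_left hD1 hB
          _ = (2:ℝ) ^ (1 / q) := mul_one _
        · exact Real.rpow_pos_of_pos h2x _
        · exact Real.rpow_le_rpow h2x.le hA2 (by positivity)
      have step2 : (2:ℝ) ^ (1 / q) / (2 - x) ^ (1 / q) = (2 / (2 - x)) ^ (1 / q) :=
        (Real.div_rpow (by norm_num) h2x.le _).symm
      have step3 : (2 / (2 - x)) ^ (1 / q) ≤ 2 / (2 - x) := by
        have hbase : (1:ℝ) ≤ 2 / (2 - x) := by
          rw [le_div_iff₀ h2x]; linarith
        calc (2 / (2 - x)) ^ (1 / q) ≤ (2 / (2 - x)) ^ (1:ℝ) :=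
          Real.rpow_le_rpow_of_exponent_le hbase (by rw [div_le_one hq0]; exact hq)
        _ = 2 / (2 - x) := Real.rpow_one _
      have step4 : 2 / (2 - x) < c := by
        have key : 2 * T < (1 - x) * (2 - x) := by
          have e1 : 1 - x = (1 + s) / 2 := by rw [hx_def]; ring
          have e2 : 2 - x = (3 + s) / 2 := by rw [hx_def]; ring
          have hp : (0:ℝ) < (1 - s) * (7 * s + 3) :=
            mul_pos (by linarith) (by linarith)
          have hexp : (1 - s) * (7 * s + 3) = 3 + 4 * s - 7 * s ^ 2 := by ring
          have e3 : (1 + s) / 2 * ((3 + s) / 2) = (3 + 4 * s + s ^ 2) / 4 := by ring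
          rw [e1, e2, ← hTs, e3]
          linarith
        rw [hc_def, div_lt_div_iff₀ h2x hT]
        linarith
      calc (2:ℝ) ^ (1 / q) * (1 - x) ^ (1 / (2 * q)) / A ^ (1 / q)
          ≤ (2 / (2 - x)) ^ (1 / q) := step2 ▸ step1
        _ ≤ 2 / (2 - x) := step3
        _ < c := step4
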